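/- Let 0 < p ≤ 1 and let N = ⌊d(1/p − 1)⌋. Then there exists a constant C > 0, depending only on d and p, such that for every r > 0, every (p, ∞, N)-atom a centered at 0 with radius r, and every x ∈ ℝ^d, one has |𝓕a(x)| ≤ C r^{N+1+d(1−1/p)} |x|^{N+1}. -/

import Mathlib

open MeasureTheory FourierTransform Finset Metric
open scoped RealInnerProductSpace

noncomputable section

/-- A `(p, ∞, N)`-atom centered at `0` with radius `r > 0`. -/
def IsPAtom (d : ℕ) (p : ℝ) (N : ℕ) (r : ℝ) (a : EuclideanSpace ℝ (Fin d) → ℂ) : Prop :=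
  Measurable a ∧
  (∀ x, x ∉ Metric.closedBall (0 : EuclideanSpace ℝ (Fin d)) r → a x = 0) ∧
  (∀ x, ‖a x‖ ≤
    (volume (Metric.closedBall (0 : EuclideanSpace ℝ (Fin d)) r)).toReal ^ (-(1 / p))) ∧
  (∀ ℓ : Fin d → ℕ, (∑ i, ℓ i) ≤ N →
    ∫ y : EuclideanSpace ℝ (Fin d), a y * ∏ i, (y i : ℂ) ^ ℓ i = 0)

lemma atom_mul_integrable {d : ℕ} {a : EuclideanSpace ℝ (Fin d) → ℂ} {r : ℝ} {M : ℝ}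
    (ha : Measurable a)
    (h0 : ∀ y, y ∉ Metric.closedBall (0 : EuclideanSpace ℝ (Fin d)) r → a y = 0)
    (hM : ∀ y, ‖a y‖ ≤ M) {g : EuclideanSpace ℝ (Fin d) → ℂ} (hg : Continuous g) :
    Integrable (fun y => a y * g y) := by
  have hsupp : Function.support (fun y => a y * g y) ⊆ Metric.closedBall 0 r := by
    intro y hy
    by_contra h
    simp [Function.mem_support, h0 y h] at hy
  rw [← integrableOn_iff_integrable_of_support_subset hsupp]
  obtain ⟨C, hC⟩ := (isCompact_closedBall (0 : EuclideanSpace ℝ (Fin d)) r).exists_bound_of_continuousOn hg.continuousOn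
  have hmeas : AEStronglyMeasurable (fun y => a y * g y)
      volume :=
    ha.aestronglyMeasurable.mul hg.measurable.aestronglyMeasurable
  refine Measure.integrableOn_of_bounded (M := M * C) measure_closedBall_lt_top.ne hmeas ?_
  filter_upwards [ae_restrict_mem measurableSet_closedBall] with y hy
  calc ‖a y * g y‖ = ‖a y‖ * ‖g y‖ := norm_mul _ _
    _ ≤ M * C := by
        apply mul_le_mul (hM y) (hC y hy) (norm_nonneg _)
        exact le_trans (norm_nonneg _) (hM y)

lemma moment_kill {d N : ℕ} {a : EuclideanSpace ℝ (Fin d) → ℂ} {r M : ℝ}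
    (ha : Measurable a)
    (h0 : ∀ y, y ∉ Metric.closedBall (0 : EuclideanSpace ℝ (Fin d)) r → a y = 0)
    (hM : ∀ y, ‖a y‖ ≤ M)
    (hmom : ∀ ℓ : Fin d → ℕ, (∑ i, ℓ i) ≤ N →
      ∫ y : EuclideanSpace ℝ (Fin d), a y * ∏ i, (y i : ℂ) ^ ℓ i = 0)
    (x : EuclideanSpace ℝ (Fin d)) {k : ℕ} (hk : k ≤ N) :
    ∫ y : EuclideanSpace ℝ (Fin d), a y * ((⟪y, x⟫ : ℝ) : ℂ) ^ k = 0 := by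
  classical
  have hinner : ∀ y : EuclideanSpace ℝ (Fin d),
      ((⟪y, x⟫ : ℝ) : ℂ) = ∑ i, (y i : ℂ) * (x i : ℂ) := by
    intro y
    simp only [PiLp.inner_apply, RCLike.inner_apply, conj_trivial]
    push_cast
    exact Finset.sum_congr rfl fun i _ => mul_comm _ _
  set ℓ : (Fin k → Fin d) → Fin d → ℕ := fun f i => #{j | f j = i} with hℓ
  have hpt : ∀ y : EuclideanSpace ℝ (Fin d),
      a y * ((⟪y, x⟫ : ℝ) : ℂ) ^ k
        = ∑ f : Fin k → Fin d, (∏ j, (x (f j) : ℂ)) * (a y * ∏ i, (y i : ℂ) ^ ℓ f i) := by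
    intro y
    rw [hinner, Fintype.sum_pow, Finset.mul_sum]
    refine Finset.sum_congr rfl fun f _ => ?_
    have h1 : ∏ i, (y i : ℂ) ^ ℓ f i = ∏ j, (y (f j) : ℂ) := by
      rw [← Finset.prod_fiberwise Finset.univ f (fun j => (y (f j) : ℂ))]
      refine Finset.prod_congr rfl fun i _ => ?_
      have hcongr : ∀ j ∈ Finset.filter (fun j => f j = i) Finset.univ,
          (y (f j) : ℂ) = (y i : ℂ) := by
        intro j hj
        simp only [Finset.mem_filter] at hj
        rw [hj.2]
      rw [Finset.prod_congr rfl hcongr, Finset.prod_const]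
    rw [Finset.prod_mul_distrib, h1]
    ring
  simp_rw [hpt]
  rw [integral_finset_sum]
  · refine Finset.sum_eq_zero fun f _ => ?_
    rw [integral_const_mul]
    have hsum : ∑ i, ℓ f i = k := by
      have := Finset.card_eq_sum_card_fiberwise
        (f := f) (s := Finset.univ) (t := Finset.univ) (fun j _ => Finset.mem_univ _)
      simp only [Finset.card_univ, Fintype.card_fin] at this
      exact this.symm
    rw [hmom (ℓ f) (hsum.le.trans hk), mul_zero]
  · intro f _
    have hg : Continuous fun y : EuclideanSpace ℝ (Fin d) => ∏ i, (y i : ℂ) ^ ℓ f i := by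
      exact continuous_finset_prod _ fun i _ =>
        ((Complex.continuous_ofReal.comp (PiLp.continuous_apply 2 _ i)).pow _)
    exact ((atom_mul_integrable ha h0 hM hg)).const_mul _

/-- Pointwise estimate for the Fourier transform of an atom:
`|𝓕a(x)| ≤ C r^{N+1+d(1-1/p)} |x|^{N+1}`. -/
theorem fourier_atom_pointwise_bound (d : ℕ) (p : ℝ) (hp0 : 0 < p) (hp1 : p ≤ 1)
    (N : ℕ) (hN : N = ⌊(d : ℝ) * (1 / p - 1)⌋₊) :
    ∃ C > 0, ∀ (r : ℝ) (a : EuclideanSpace ℝ (Fin d) → ℂ),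
      0 < r → IsPAtom d p N r a →
      ∀ x : EuclideanSpace ℝ (Fin d),
        ‖𝓕 a x‖ ≤ C * r ^ ((N : ℝ) + 1 + d * (1 - 1 / p)) * ‖x‖ ^ ((N : ℝ) + 1) := by
  classical
  set E := EuclideanSpace ℝ (Fin d)
  set c0 : ℝ := (volume (Metric.closedBall (0 : E) 1)).toReal with hc0
  have hc0pos : 0 < c0 := by
    apply ENNReal.toReal_pos
    · exact (measure_closedBall_pos volume (0 : E) one_pos).ne'
    · exact measure_closedBall_lt_top.ne
  set K : ℝ := ((N + 1).succ : ℝ) * (((N + 1).factorial : ℝ) * ((N + 1 : ℕ) : ℝ))⁻¹ with hK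
  have hKpos : 0 < K := by positivity
  set C : ℝ := c0 ^ (1 - 1 / p) * (2 * Real.pi) ^ (N + 1) * (K + 1) with hC
  have hCpos : 0 < C := by positivity
  refine ⟨C, hCpos, ?_⟩
  rintro r a hr ⟨ha, h0, hbd, hmom⟩ x
  set V : ℝ := (volume (Metric.closedBall (0 : E) r)).toReal with hV
  set M : ℝ := V ^ (-(1 / p)) with hM
  have hVval : V = r ^ d * c0 := by
    rw [hV, Measure.addHaar_closedBall' volume (0 : E) hr.le]
    rw [ENNReal.toReal_mul, ENNReal.toReal_ofReal (by positivity), finrank_euclideanSpace_fin]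
  have hVpos : 0 < V := by rw [hVval]; positivity
  have key : V * M = c0 ^ (1 - 1 / p) * r ^ ((d : ℝ) * (1 - 1 / p)) := by
    have h1 : V * M = V ^ (1 - 1 / p) := by
      rw [hM]
      nth_rewrite 1 [← Real.rpow_one V]
      rw [← Real.rpow_add hVpos]
      congr 1
    rw [h1, hVval, Real.mul_rpow (by positivity) hc0pos.le,
      ← Real.rpow_natCast r d, ← Real.rpow_mul hr.le]
    ring
  -- the oscillating factor
  set z : EuclideanSpace ℝ (Fin d) → ℂ :=
    fun v => ((-2 * Real.pi * ⟪v, x⟫ : ℝ) : ℂ) * Complex.I with hz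
  have hz_cont : Continuous z := by
    apply Continuous.mul _ continuous_const
    exact Complex.continuous_ofReal.comp
      ((continuous_const.mul (Continuous.inner continuous_id continuous_const)))
  have hzabs : ∀ v, ‖z v‖ = 2 * Real.pi * |⟪v, x⟫| := by
    intro v
    rw [hz]
    rw [norm_mul, Complex.norm_I, Complex.norm_real, Real.norm_eq_abs, mul_one, abs_mul, abs_mul]
    simp [abs_of_nonneg Real.pi_pos.le]
  have hzle : ∀ v ∈ Metric.closedBall (0 : EuclideanSpace ℝ (Fin d)) r,
      ‖z v‖ ≤ 2 * Real.pi * (r * ‖x‖) := by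
    intro v hv
    rw [hzabs]
    have h1 : |⟪v, x⟫| ≤ ‖v‖ * ‖x‖ := abs_real_inner_le_norm v x
    have h2 : ‖v‖ ≤ r := mem_closedBall_zero_iff.mp hv
    have := h1.trans (mul_le_mul_of_nonneg_right h2 (norm_nonneg x))
    nlinarith [Real.pi_pos]
  set P : EuclideanSpace ℝ (Fin d) → ℂ :=
    fun v => ∑ m ∈ Finset.range (N + 1), z v ^ m / m.factorial with hP
  have hP_cont : Continuous P :=
    continuous_finset_sum _ fun m _ => (hz_cont.pow m).div_const _
  -- representation of the Fourier transform
  have hrep : 𝓕 a x = ∫ v, a v * Complex.exp (z v) := by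
    rw [Real.fourier_eq']
    congr 1
    funext v
    rw [smul_eq_mul, mul_comm]
  -- vanishing of the polynomial part
  have hP0 : ∫ v, a v * P v = 0 := by
    simp only [hP, Finset.mul_sum]
    rw [integral_finset_sum]
    · refine Finset.sum_eq_zero fun m hm => ?_
      have hmN : m ≤ N := Nat.lt_succ_iff.mp (Finset.mem_range.mp hm)
      have hz_eq : ∀ v : EuclideanSpace ℝ (Fin d),
          a v * (z v ^ m / (m.factorial : ℂ))
            = (((-2 * Real.pi : ℝ) : ℂ) * Complex.I) ^ m / (m.factorial : ℂ)
              * (a v * ((⟪v, x⟫ : ℝ) : ℂ) ^ m) := by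
        intro v
        rw [hz]
        push_cast
        ring
      simp_rw [hz_eq]
      rw [integral_const_mul, moment_kill ha h0 hbd hmom x hmN, mul_zero]
    · intro m _
      exact atom_mul_integrable ha h0 hbd ((hz_cont.pow m).div_const _)
  have hint1 : Integrable (fun v => a v * Complex.exp (z v)) :=
    atom_mul_integrable ha h0 hbd (Complex.continuous_exp.comp hz_cont)
  have hint2 : Integrable (fun v => a v * P v) :=
    atom_mul_integrable ha h0 hbd hP_cont
  have hsub : 𝓕 a x = ∫ v, a v * (Complex.exp (z v) - P v) := by
    calc 𝓕 a x = ∫ v, a v * Complex.exp (z v) := hrep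
      _ = (∫ v, a v * Complex.exp (z v)) - ∫ v, a v * P v := by rw [hP0, sub_zero]
      _ = ∫ v, (a v * Complex.exp (z v) - a v * P v) := (integral_sub hint1 hint2).symm
      _ = ∫ v, a v * (Complex.exp (z v) - P v) := by simp_rw [mul_sub]
  -- rewrite the target right-hand side
  have hrhs : C * r ^ ((N : ℝ) + 1 + d * (1 - 1 / p)) * ‖x‖ ^ ((N : ℝ) + 1)
      = c0 ^ (1 - 1 / p) * r ^ ((d : ℝ) * (1 - 1 / p))
          * ((K + 1) * ((2 * Real.pi) ^ (N + 1) * (r ^ (N + 1) * ‖x‖ ^ (N + 1)))) := by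
    rw [show ((N : ℝ) + 1 + d * (1 - 1 / p)) = ((N + 1 : ℕ) : ℝ) + (d : ℝ) * (1 - 1 / p) by
        push_cast; ring,
      Real.rpow_add hr, Real.rpow_natCast,
      show ((N : ℝ) + 1) = ((N + 1 : ℕ) : ℝ) by push_cast; ring, Real.rpow_natCast, hC]
    ring
  rw [hrhs]
  have hXnonneg : 0 ≤ c0 ^ (1 - 1 / p) * r ^ ((d : ℝ) * (1 - 1 / p)) := by positivity
  by_cases h1 : 2 * Real.pi * (r * ‖x‖) ≤ 1
  · -- small frequency: Taylor estimate
    have hptb : ∀ v ∈ Metric.closedBall (0 : EuclideanSpace ℝ (Fin d)) r,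
        ‖a v * (Complex.exp (z v) - P v)‖
          ≤ M * (K * (2 * Real.pi * (r * ‖x‖)) ^ (N + 1)) := by
      intro v hv
      rw [norm_mul]
      have hMnn : 0 ≤ M := le_trans (norm_nonneg _) (hbd v)
      apply mul_le_mul (hbd v) ?_ (norm_nonneg _) hMnn
      have hz1 : ‖z v‖ ≤ 1 := (hzle v hv).trans h1
      have hb := Complex.exp_bound hz1 (Nat.succ_pos N)
      calc ‖Complex.exp (z v) - P v‖
          ≤ ‖z v‖ ^ (N + 1)
              * (((N + 1).succ : ℝ) * (((N + 1).factorial : ℝ) * ((N + 1 : ℕ) : ℝ))⁻¹) := by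
            exact_mod_cast hb
        _ ≤ (2 * Real.pi * (r * ‖x‖)) ^ (N + 1) * K := by
            refine mul_le_mul_of_nonneg_right ?_ hKpos.le
            exact pow_le_pow_left₀ (norm_nonneg _) (hzle v hv) _
        _ = K * (2 * Real.pi * (r * ‖x‖)) ^ (N + 1) := mul_comm _ _
    have hzero : ∀ v, v ∉ Metric.closedBall (0 : EuclideanSpace ℝ (Fin d)) r →
        a v * (Complex.exp (z v) - P v) = 0 := by
      intro v hv; rw [h0 v hv, zero_mul]
    have hnorm : ‖𝓕 a x‖ ≤ M * (K * (2 * Real.pi * (r * ‖x‖)) ^ (N + 1)) * V := by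
      rw [hsub, ← setIntegral_eq_integral_of_forall_compl_eq_zero hzero]
      exact norm_setIntegral_le_of_norm_le_const measure_closedBall_lt_top
        hptb
    calc ‖𝓕 a x‖ ≤ M * (K * (2 * Real.pi * (r * ‖x‖)) ^ (N + 1)) * V := hnorm
      _ = (V * M) * (K * ((2 * Real.pi) ^ (N + 1) * (r ^ (N + 1) * ‖x‖ ^ (N + 1)))) := by
          rw [mul_pow, mul_pow]; ring
      _ = c0 ^ (1 - 1 / p) * r ^ ((d : ℝ) * (1 - 1 / p))
            * (K * ((2 * Real.pi) ^ (N + 1) * (r ^ (N + 1) * ‖x‖ ^ (N + 1)))) := by rw [key]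
      _ ≤ c0 ^ (1 - 1 / p) * r ^ ((d : ℝ) * (1 - 1 / p))
            * ((K + 1) * ((2 * Real.pi) ^ (N + 1) * (r ^ (N + 1) * ‖x‖ ^ (N + 1)))) := by
          refine mul_le_mul_of_nonneg_left ?_ hXnonneg
          refine mul_le_mul_of_nonneg_right (by linarith) (by positivity)
  · -- large frequency: trivial estimate
    push_neg at h1
    have hzero : ∀ v, v ∉ Metric.closedBall (0 : EuclideanSpace ℝ (Fin d)) r →
        a v * Complex.exp (z v) = 0 := by
      intro v hv; rw [h0 v hv, zero_mul]
    have hptb : ∀ v ∈ Metric.closedBall (0 : EuclideanSpace ℝ (Fin d)) r,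
        ‖a v * Complex.exp (z v)‖ ≤ M := by
      intro v hv
      calc ‖a v * Complex.exp (z v)‖ = ‖a v‖ * ‖Complex.exp (z v)‖ := norm_mul _ _
        _ = ‖a v‖ := by
            have h2 : ‖Complex.exp (z v)‖ = 1 := by
              show ‖
                (Complex.exp (((-2 * Real.pi * ⟪v, x⟫ : ℝ) : ℂ) * Complex.I))‖ = 1
              exact Complex.norm_exp_ofReal_mul_I _
            rw [h2, mul_one]
        _ ≤ M := hbd v
    have hnorm : ‖𝓕 a x‖ ≤ M * V := by
      rw [hrep, ← setIntegral_eq_integral_of_forall_compl_eq_zero hzero]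
      exact norm_setIntegral_le_of_norm_le_const measure_closedBall_lt_top
        hptb
    have hone : (1 : ℝ) ≤ (K + 1) * ((2 * Real.pi) ^ (N + 1) * (r ^ (N + 1) * ‖x‖ ^ (N + 1))) := by
      have h2 : (1 : ℝ) ≤ (2 * Real.pi * (r * ‖x‖)) ^ (N + 1) :=
        one_le_pow₀ h1.le
      calc (1 : ℝ) ≤ (2 * Real.pi * (r * ‖x‖)) ^ (N + 1) := h2
        _ = 1 * ((2 * Real.pi) ^ (N + 1) * (r ^ (N + 1) * ‖x‖ ^ (N + 1))) := by
            rw [mul_pow, mul_pow]; ring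
        _ ≤ (K + 1) * ((2 * Real.pi) ^ (N + 1) * (r ^ (N + 1) * ‖x‖ ^ (N + 1))) := by
            refine mul_le_mul_of_nonneg_right (by linarith) (by positivity)
    calc ‖𝓕 a x‖ ≤ M * V := hnorm
      _ = c0 ^ (1 - 1 / p) * r ^ ((d : ℝ) * (1 - 1 / p)) := by rw [mul_comm, key]
      _ ≤ c0 ^ (1 - 1 / p) * r ^ ((d : ℝ) * (1 - 1 / p))
            * ((K + 1) * ((2 * Real.pi) ^ (N + 1) * (r ^ (N + 1) * ‖x‖ ^ (N + 1)))) :=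
          le_mul_of_one_le_right hXnonneg hone
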